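/- Let A be a primitive J(α,β)-axial algebra satisfying the (⋆) condition, and let (·,·) be the unique Frobenius form on A with (c,c) = 1 for every primitive axis c. Then A is baric, i.e. there exists an F-algebra homomorphism w : A → F with w(c) = 1 for every primitive axis c ∈ A, if and only if (c,d) = 1 for all primitive axes c, d ∈ A. -/

import Mathlib

variable (F : Type*) [Field F] (A : Type*) [NonUnitalNonAssocCommRing A]
  [Module F A] [SMulCommClass F A A] [IsScalarTower F A A]

/-- The `l`-eigenspace of the left multiplication operator `ad_a`. -/
def eigSp (a : A) (l : F) : Submodule F A where
  carrier := {x | a * x = l • x}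
  add_mem' := by
    intro x y hx hy
    simp only [Set.mem_setOf_eq] at *
    rw [mul_add, hx, hy, smul_add]
  zero_mem' := by simp
  smul_mem' := by
    intro c x hx
    simp only [Set.mem_setOf_eq] at *
    rw [mul_smul_comm, hx, smul_comm]

/-- `a` is a `J(α,β)`-axis: an idempotent whose adjoint is semisimple with
eigenvalues among `1, α, β`, satisfying the fusion law `J(α,β)`. -/
structure IsJAxis (α β : F) (a : A) : Prop where
  idem : a * a = a
  decomp : eigSp F A a 1 ⊔ eigSp F A a α ⊔ eigSp F A a β = ⊤
  f11 : ∀ x ∈ eigSp F A a 1, ∀ y ∈ eigSp F A a 1, x * y ∈ eigSp F A a 1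
  f1a : ∀ x ∈ eigSp F A a 1, ∀ y ∈ eigSp F A a α, x * y ∈ eigSp F A a α
  f1b : ∀ x ∈ eigSp F A a 1, ∀ y ∈ eigSp F A a β, x * y ∈ eigSp F A a β
  faa : ∀ x ∈ eigSp F A a α, ∀ y ∈ eigSp F A a α, x * y ∈ eigSp F A a 1 ⊔ eigSp F A a α
  fab : ∀ x ∈ eigSp F A a α, ∀ y ∈ eigSp F A a β, x * y ∈ eigSp F A a β
  fbb : ∀ x ∈ eigSp F A a β, ∀ y ∈ eigSp F A a β, x * y ∈ eigSp F A a 1 ⊔ eigSp F A a α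

/-- A primitive `J(α,β)`-axis: `A_1(a) = F·a`. -/
def IsPrimJAxis (α β : F) (a : A) : Prop :=
  IsJAxis F A α β a ∧ eigSp F A a 1 = Submodule.span F {a}

/-- `A` is a primitive `J(α,β)`-axial algebra: generated as an `F`-algebra by a
set of primitive `J(α,β)`-axes. -/
def IsJAxialAlg (α β : F) : Prop :=
  ∃ S : Set A, (∀ a ∈ S, IsPrimJAxis F A α β a) ∧ NonUnitalAlgebra.adjoin F S = ⊤

/-- The `(⋆)` condition: for any two primitive axes `a, b`, writing
`b = x • a + bα + bβ`, the projection of `a` onto `A_1(b)` equals `x • b`. -/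
def StarCond (α β : F) : Prop :=
  ∀ a b : A, IsPrimJAxis F A α β a → IsPrimJAxis F A α β b →
    ∀ x : F, ∀ bα ∈ eigSp F A a α, ∀ bβ ∈ eigSp F A a β, b = x • a + bα + bβ →
      ∃ aα ∈ eigSp F A b α, ∃ aβ ∈ eigSp F A b β, a = x • b + aα + aβ

/-- A Frobenius form: a nonzero symmetric bilinear form that associates with
the product. -/
def IsFrobenius (B : A →ₗ[F] A →ₗ[F] F) : Prop :=
  B ≠ 0 ∧ (∀ u v, B u v = B v u) ∧ ∀ u v w, B u (v * w) = B (u * v) w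

/-- `τ` is the Miyamoto involution associated to the axis `a`: it fixes
`A_1(a) ⊕ A_α(a)` pointwise and negates `A_β(a)`. -/
def IsMiyamoto (α β : F) (a : A) (τ : A →ₗ[F] A) : Prop :=
  (∀ x ∈ eigSp F A a 1 ⊔ eigSp F A a α, τ x = x) ∧ ∀ x ∈ eigSp F A a β, τ x = -x


set_option linter.unusedSectionVars false

section Helpers

variable {F A}

lemma mem_eigSp {a x : A} {l : F} : x ∈ eigSp F A a l ↔ a * x = l • x := Iff.rfl

lemma self_mem_eigSp_one {a : A} (ha : a * a = a) : a ∈ eigSp F A a 1 := by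
  rw [mem_eigSp, one_smul, ha]

lemma eig_disjoint {α β : F} (hα1 : α ≠ 1) (hβ1 : β ≠ 1) (hαβ : α ≠ β) (a : A) :
    Disjoint (eigSp F A a 1 ⊔ eigSp F A a α) (eigSp F A a β) := by
  rw [Submodule.disjoint_def]
  intro x hxp hxq
  obtain ⟨u, hu, v, hv, rfl⟩ := Submodule.mem_sup.mp hxp
  rw [mem_eigSp] at hu hv hxq
  rw [one_smul] at hu
  have e : u - β • u = β • v - α • v := by
    rw [mul_add, hu, hv, smul_add] at hxq
    linear_combination (norm := module) hxq
  have h3 : a * (β • v - α • v) = α • (β • v - α • v) := by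
    rw [mul_sub, mul_smul_comm, mul_smul_comm, hv]
    module
  have e2 : u - β • u = α • (u - β • u) := by
    calc u - β • u = a * u - β • (a * u) := by rw [hu]
    _ = a * (u - β • u) := by rw [mul_sub, mul_smul_comm]
    _ = a * (β • v - α • v) := by rw [e]
    _ = α • (β • v - α • v) := h3
    _ = α • (u - β • u) := by rw [← e]
  have hu0 : u = 0 := by
    have h4 : (1 - α) • (u - β • u) = 0 := by
      rw [sub_smul, one_smul, ← e2, sub_self]
    have h5 : u - β • u = 0 :=
      (smul_eq_zero.mp h4).resolve_left (sub_ne_zero_of_ne hα1.symm)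
    have h6 : (1 - β) • u = 0 := by rw [sub_smul, one_smul]; exact h5
    exact (smul_eq_zero.mp h6).resolve_left (sub_ne_zero_of_ne hβ1.symm)
  have hv0 : v = 0 := by
    have h7 : (β - α) • v = 0 := by
      rw [sub_smul, ← e, hu0, smul_zero, sub_zero]
    exact (smul_eq_zero.mp h7).resolve_left (sub_ne_zero_of_ne hαβ.symm)
  rw [hu0, hv0, add_zero]


lemma eig_isCompl {α β : F} (hα1 : α ≠ 1) (hβ1 : β ≠ 1) (hαβ : α ≠ β) {a : A}
    (ha : IsJAxis F A α β a) :
    IsCompl (eigSp F A a 1 ⊔ eigSp F A a α) (eigSp F A a β) :=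
  ⟨eig_disjoint hα1 hβ1 hαβ a, codisjoint_iff.mpr ha.decomp⟩

lemma even_mul_even {α β : F} {a : A} (ha : IsJAxis F A α β a) :
    ∀ x ∈ eigSp F A a 1 ⊔ eigSp F A a α, ∀ y ∈ eigSp F A a 1 ⊔ eigSp F A a α,
      x * y ∈ eigSp F A a 1 ⊔ eigSp F A a α := by
  intro x hx y hy
  obtain ⟨u, hu, v, hv, rfl⟩ := Submodule.mem_sup.mp hx
  obtain ⟨u', hu', v', hv', rfl⟩ := Submodule.mem_sup.mp hy
  have h1 : u * u' ∈ eigSp F A a 1 ⊔ eigSp F A a α :=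
    Submodule.mem_sup_left (ha.f11 u hu u' hu')
  have h2 : u * v' ∈ eigSp F A a 1 ⊔ eigSp F A a α :=
    Submodule.mem_sup_right (ha.f1a u hu v' hv')
  have h3 : v * u' ∈ eigSp F A a 1 ⊔ eigSp F A a α := by
    rw [mul_comm]
    exact Submodule.mem_sup_right (ha.f1a u' hu' v hv)
  have h4 : v * v' ∈ eigSp F A a 1 ⊔ eigSp F A a α := ha.faa v hv v' hv'
  have he : (u + v) * (u' + v') = u * u' + u * v' + (v * u' + v * v') := by
    rw [add_mul, mul_add, mul_add]
  rw [he]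
  exact add_mem (add_mem h1 h2) (add_mem h3 h4)

lemma even_mul_odd {α β : F} {a : A} (ha : IsJAxis F A α β a) :
    ∀ x ∈ eigSp F A a 1 ⊔ eigSp F A a α, ∀ y ∈ eigSp F A a β,
      x * y ∈ eigSp F A a β := by
  intro x hx y hy
  obtain ⟨u, hu, v, hv, rfl⟩ := Submodule.mem_sup.mp hx
  rw [add_mul]
  exact add_mem (ha.f1b u hu y hy) (ha.fab v hv y hy)

lemma exists_miyamoto {α β : F} (hα1 : α ≠ 1) (hβ1 : β ≠ 1) (hαβ : α ≠ β) {a : A}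
    (ha : IsJAxis F A α β a) :
    ∃ τ : A →ₗ[F] A, IsMiyamoto F A α β a τ ∧ (∀ x, τ (τ x) = x) ∧
      ∀ x y, τ (x * y) = τ x * τ y := by
  set p := eigSp F A a 1 ⊔ eigSp F A a α with hp
  set q := eigSp F A a β with hq
  have hc : IsCompl p q := eig_isCompl hα1 hβ1 hαβ ha
  set π := q.projectionOnto p hc.symm with hπ
  set τ := LinearMap.id - 2 • (q.subtype ∘ₗ π) with hτ
  have hfix : ∀ x ∈ p, τ x = x := by
    intro x hx
    simp only [hτ, LinearMap.sub_apply, LinearMap.id_apply, LinearMap.smul_apply,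
      LinearMap.comp_apply]
    rw [hπ, Submodule.projectionOnto_apply_of_mem_right hc.symm hx]
    simp
  have hneg : ∀ x ∈ q, τ x = -x := by
    intro x hx
    simp only [hτ, LinearMap.sub_apply, LinearMap.id_apply, LinearMap.smul_apply,
      LinearMap.comp_apply]
    rw [hπ, Submodule.projectionOnto_apply_left hc.symm ⟨x, hx⟩]
    simp only [Submodule.subtype_apply]
    rw [two_smul]
    abel
  have hdec : ∀ x : A, ∃ u ∈ p, ∃ v ∈ q, u + v = x := by
    intro x
    exact Submodule.mem_sup.mp (by rw [codisjoint_iff.mp hc.codisjoint]; trivial)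
  refine ⟨τ, ⟨hfix, hneg⟩, ?_, ?_⟩
  · intro x
    obtain ⟨u, hu, v, hv, rfl⟩ := hdec x
    rw [map_add, hfix u hu, hneg v hv, map_add, hfix u hu, map_neg, hneg v hv,
      neg_neg]
  · intro x y
    obtain ⟨u, hu, v, hv, rfl⟩ := hdec x
    obtain ⟨u', hu', v', hv', rfl⟩ := hdec y
    have he : (u + v) * (u' + v') = (u * u' + v * v') + (u * v' + v * u') := by
      rw [add_mul, mul_add, mul_add]
      abel
    have hme : u * u' + v * v' ∈ p := by
      refine add_mem (even_mul_even ha u hu u' hu') ?_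
      rw [hp]
      exact ha.fbb v hv v' hv'
    have hmo : u * v' + v * u' ∈ q := by
      refine add_mem (even_mul_odd ha u hu v' hv') ?_
      rw [mul_comm]
      exact even_mul_odd ha u' hu' v hv
    have hl : τ ((u + v) * (u' + v')) = (u * u' + v * v') + -(u * v' + v * u') := by
      rw [he, map_add, hfix _ hme, hneg _ hmo]
    have hr : τ (u + v) * τ (u' + v') = (u * u' + v * v') + -(u * v' + v * u') := by
      rw [map_add, map_add, hfix u hu, hneg v hv, hfix u' hu', hneg v' hv']
      rw [add_mul, mul_add, mul_add]
      simp only [neg_mul, mul_neg, neg_neg]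
      abel
    rw [hl, hr]


lemma eigSp_map {τ : A →ₗ[F] A} (hinv : ∀ x, τ (τ x) = x)
    (hm : ∀ x y, τ (x * y) = τ x * τ y) (c : A) (l : F) :
    eigSp F A (τ c) l = Submodule.map τ (eigSp F A c l) := by
  ext x
  simp only [Submodule.mem_map]
  constructor
  · intro hx
    have hx' : τ c * x = l • x := hx
    refine ⟨τ x, ?_, hinv x⟩
    show c * τ x = l • τ x
    have h5 : τ (τ c * x) = τ (l • x) := by rw [hx']
    rw [hm, hinv, map_smul] at h5
    exact h5
  · rintro ⟨y, hy, rfl⟩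
    have hy' : c * y = l • y := hy
    show τ c * τ y = l • τ y
    rw [← hm, hy', map_smul]

lemma axis_map {α β : F} {τ : A →ₗ[F] A} (hinv : ∀ x, τ (τ x) = x)
    (hm : ∀ x y, τ (x * y) = τ x * τ y) {c : A} (hc : IsPrimJAxis F A α β c) :
    IsPrimJAxis F A α β (τ c) := by
  have hsurj : Function.Surjective τ := fun x => ⟨τ x, hinv x⟩
  have hmap := eigSp_map hinv hm c
  constructor
  · constructor
    · rw [← hm, hc.1.idem]
    · rw [hmap, hmap, hmap, ← Submodule.map_sup, ← Submodule.map_sup, hc.1.decomp,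
        Submodule.map_top, LinearMap.range_eq_top.mpr hsurj]
    · rintro x hx y hy
      rw [hmap] at hx hy ⊢
      obtain ⟨u, hu, rfl⟩ := hx
      obtain ⟨v, hv, rfl⟩ := hy
      rw [← hm]
      exact Submodule.mem_map_of_mem (hc.1.f11 u hu v hv)
    · rintro x hx y hy
      rw [hmap] at hx hy ⊢
      obtain ⟨u, hu, rfl⟩ := hx
      obtain ⟨v, hv, rfl⟩ := hy
      rw [← hm]
      exact Submodule.mem_map_of_mem (hc.1.f1a u hu v hv)
    · rintro x hx y hy
      rw [hmap] at hx hy ⊢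
      obtain ⟨u, hu, rfl⟩ := hx
      obtain ⟨v, hv, rfl⟩ := hy
      rw [← hm]
      exact Submodule.mem_map_of_mem (hc.1.f1b u hu v hv)
    · rintro x hx y hy
      rw [hmap] at hx hy
      rw [hmap, hmap, ← Submodule.map_sup]
      obtain ⟨u, hu, rfl⟩ := hx
      obtain ⟨v, hv, rfl⟩ := hy
      rw [← hm]
      exact Submodule.mem_map_of_mem (hc.1.faa u hu v hv)
    · rintro x hx y hy
      rw [hmap] at hx hy ⊢
      obtain ⟨u, hu, rfl⟩ := hx
      obtain ⟨v, hv, rfl⟩ := hy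
      rw [← hm]
      exact Submodule.mem_map_of_mem (hc.1.fab u hu v hv)
    · rintro x hx y hy
      rw [hmap] at hx hy
      rw [hmap, hmap, ← Submodule.map_sup]
      obtain ⟨u, hu, rfl⟩ := hx
      obtain ⟨v, hv, rfl⟩ := hy
      rw [← hm]
      exact Submodule.mem_map_of_mem (hc.1.fbb u hu v hv)
  · rw [hmap, hc.2, Submodule.map_span, Set.image_singleton]

lemma exists_decomp {α β : F} {a : A} (ha : IsPrimJAxis F A α β a) (d : A) :
    ∃ l : F, ∃ dA ∈ eigSp F A a α, ∃ dB ∈ eigSp F A a β, d = l • a + dA + dB := by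
  have hd : d ∈ eigSp F A a 1 ⊔ eigSp F A a α ⊔ eigSp F A a β := by
    rw [ha.1.decomp]; trivial
  obtain ⟨e, he, dB, hdB, rfl⟩ := Submodule.mem_sup.mp hd
  obtain ⟨d1, hd1, dA, hdA, rfl⟩ := Submodule.mem_sup.mp he
  rw [ha.2, Submodule.mem_span_singleton] at hd1
  obtain ⟨l, rfl⟩ := hd1
  exact ⟨l, dA, hdA, dB, hdB, rfl⟩

lemma span_axes {α β : F} (h2 : (2 : F) ≠ 0) (hα1 : α ≠ 1) (hβ1 : β ≠ 1)
    (hαβ : α ≠ β) (hA : IsJAxialAlg F A α β) :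
    Submodule.span F {c : A | IsPrimJAxis F A α β c} = ⊤ := by
  set T := Submodule.span F {c : A | IsPrimJAxis F A α β c} with hT
  have hcore : ∀ c d : A, IsPrimJAxis F A α β c → IsPrimJAxis F A α β d →
      c * d ∈ T := by
    intro c d hc hd
    obtain ⟨l, dA, hdA, dB, hdB, hdec⟩ := exists_decomp hc d
    obtain ⟨τ, hτmi, hτinv, hτmul⟩ := exists_miyamoto hα1 hβ1 hαβ hc.1
    have hd' : IsPrimJAxis F A α β (τ d) := axis_map hτinv hτmul hd
    have hτd : τ d = l • c + dA - dB := by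
      rw [hdec, map_add, map_add, hτmi.2 dB hdB,
        hτmi.1 (l • c) (Submodule.mem_sup_left
          (Submodule.smul_mem _ l (self_mem_eigSp_one hc.1.idem))),
        hτmi.1 dA (Submodule.mem_sup_right hdA), sub_eq_add_neg]
    have hcT : c ∈ T := Submodule.subset_span hc
    have hdT : d ∈ T := Submodule.subset_span hd
    have hd'T : τ d ∈ T := Submodule.subset_span hd'
    have hX : (2*l - 2*l*α) • c + (α + β) • d + (α - β) • (τ d) ∈ T :=
      add_mem (add_mem (T.smul_mem _ hcT) (T.smul_mem _ hdT)) (T.smul_mem _ hd'T)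
    have hmul : c * d = l • c + α • dA + β • dB := by
      rw [hdec, mul_add, mul_add, mul_smul_comm, hc.1.idem,
        mem_eigSp.mp hdA, mem_eigSp.mp hdB]
    have h2e : (2 : F) • (c * d) = (2*l - 2*l*α) • c + (α + β) • d + (α - β) • (τ d) := by
      rw [hmul, hτd, hdec]
      module
    have hcd : c * d = (2 : F)⁻¹ • ((2 : F) • (c * d)) := by
      rw [smul_smul, inv_mul_cancel₀ h2, one_smul]
    rw [hcd, h2e]
    exact T.smul_mem _ hX
  have hmulT : ∀ x ∈ T, ∀ y ∈ T, x * y ∈ T := by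
    have step2 : ∀ c : A, IsPrimJAxis F A α β c → ∀ y ∈ T, c * y ∈ T := by
      intro c hc
      have hle : T ≤ Submodule.comap (LinearMap.mul F A c) T := by
        rw [hT]
        apply Submodule.span_le.mpr
        intro d hd
        simp only [SetLike.mem_coe, Submodule.mem_comap, LinearMap.mul_apply']
        exact hcore c d hc hd
      intro y hy
      exact hle hy
    intro x hx y hy
    have hle : T ≤ Submodule.comap ((LinearMap.mul F A).flip y) T := by
      rw [hT]
      apply Submodule.span_le.mpr
      intro c hc
      simp only [SetLike.mem_coe, Submodule.mem_comap, LinearMap.flip_apply,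
        LinearMap.mul_apply']
      exact step2 c hc y hy
    exact hle hx
  obtain ⟨S, hS1, hS2⟩ := hA
  have hle : NonUnitalAlgebra.adjoin F S ≤
      T.toNonUnitalSubalgebra (fun x y hx hy => hmulT x hx y hy) :=
    NonUnitalAlgebra.adjoin_le (fun s hs => Submodule.subset_span (hS1 s hs))
  rw [hS2] at hle
  rw [eq_top_iff]
  intro x _
  exact hle (show x ∈ (⊤ : NonUnitalSubalgebra F A) from trivial)

theorem baric_iff_form_one (α β : F) (h2 : (2 : F) ≠ 0)
    (hα1 : α ≠ 1) (hβ1 : β ≠ 1) (hαβ : α ≠ β)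
    (hA : IsJAxialAlg F A α β) (hstar : StarCond F A α β)
    (B : A →ₗ[F] A →ₗ[F] F) (hB : IsFrobenius F A B)
    (hBnorm : ∀ c : A, IsPrimJAxis F A α β c → B c c = 1) :
    (∃ w : A →ₙₐ[F] F, ∀ c : A, IsPrimJAxis F A α β c → w c = 1) ↔
      (∀ c d : A, IsPrimJAxis F A α β c → IsPrimJAxis F A α β d → B c d = 1) := by
  obtain ⟨hBne, hBsym, hBfro⟩ := hB
  constructor
  · rintro ⟨w, hw⟩ c d hc hd
    obtain ⟨l, dA, hdA, dB, hdB, hdec⟩ := exists_decomp hc d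
    have hwc : w c = 1 := hw c hc
    have hker : ∀ l' : F, l' ≠ 1 → ∀ x, x ∈ eigSp F A c l' → w x = 0 := by
      intro l' hl' x hx
      have h5 : w (c * x) = w c * w x := map_mul w c x
      rw [mem_eigSp.mp hx, map_smul, hwc, one_mul, smul_eq_mul] at h5
      have h6 : (l' - 1) * w x = 0 := by rw [sub_mul, one_mul, h5, sub_self]
      rcases mul_eq_zero.mp h6 with h | h
      · exact absurd (sub_eq_zero.mp h) hl'
      · exact h
    have hwd : w d = l := by
      rw [hdec, map_add, map_add, map_smul, hwc, hker α hα1 dA hdA,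
        hker β hβ1 dB hdB, smul_eq_mul, mul_one, add_zero, add_zero]
    have hl : l = 1 := by rw [← hwd, hw d hd]
    have hBker : ∀ l' : F, l' ≠ 1 → ∀ x, x ∈ eigSp F A c l' → B c x = 0 := by
      intro l' hl' x hx
      have h5 : B c (l' • x) = B c x := by
        rw [← mem_eigSp.mp hx, hBfro, hc.1.idem]
      rw [map_smul, smul_eq_mul] at h5
      have h6 : (l' - 1) * B c x = 0 := by rw [sub_mul, one_mul, h5, sub_self]
      rcases mul_eq_zero.mp h6 with h | h
      · exact absurd (sub_eq_zero.mp h) hl'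
      · exact h
    rw [hdec, map_add, map_add, map_smul, hBnorm c hc, hBker α hα1 dA hdA,
      hBker β hβ1 dB hdB, hl, smul_eq_mul, mul_one, add_zero, add_zero]
  · intro h1
    by_cases hex : ∃ c : A, IsPrimJAxis F A α β c
    · obtain ⟨c₀, hc₀⟩ := hex
      have hspan := span_axes h2 hα1 hβ1 hαβ hA
      have key1 : ∀ d : A, IsPrimJAxis F A α β d → ∀ x : A, B x d = B x c₀ := by
        intro d hd x
        have hle : Submodule.span F {c : A | IsPrimJAxis F A α β c} ≤
            LinearMap.ker (B.flip d - B.flip c₀) := by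
          apply Submodule.span_le.mpr
          intro c hc
          simp only [SetLike.mem_coe, LinearMap.mem_ker, LinearMap.sub_apply,
            LinearMap.flip_apply]
          rw [h1 c d hc hd, h1 c c₀ hc hc₀, sub_self]
        rw [hspan] at hle
        have hx := hle (Submodule.mem_top (R := F) (M := A) (x := x))
        simp only [LinearMap.mem_ker, LinearMap.sub_apply, LinearMap.flip_apply,
          sub_eq_zero] at hx
        exact hx
      have key : ∀ x y : A, B x y = B x c₀ * B y c₀ := by
        intro x y
        have hle : Submodule.span F {c : A | IsPrimJAxis F A α β c} ≤
            LinearMap.ker (B x - (B x c₀) • B c₀) := by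
          apply Submodule.span_le.mpr
          intro d hd
          simp only [SetLike.mem_coe, LinearMap.mem_ker, LinearMap.sub_apply,
            LinearMap.smul_apply, smul_eq_mul]
          rw [key1 d hd x, key1 d hd c₀, hBnorm c₀ hc₀, mul_one, sub_self]
        rw [hspan] at hle
        have hy := hle (Submodule.mem_top (R := F) (M := A) (x := y))
        simp only [LinearMap.mem_ker, LinearMap.sub_apply, LinearMap.smul_apply,
          smul_eq_mul, sub_eq_zero] at hy
        rw [hBsym c₀ y] at hy
        exact hy
      refine ⟨⟨⟨⟨fun x => B x c₀, ?_⟩, ?_, ?_⟩, ?_⟩, ?_⟩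
      · intro m x
        simp [map_smul]
      · simp
      · intro x y
        simp [map_add]
      · intro x y
        have e1 : B (x * y) c₀ = B (c₀ * x) y := by
          rw [hBsym, hBfro]
        have e2 : B (c₀ * x) c₀ = B x c₀ := by
          rw [hBsym (c₀ * x) c₀, hBfro, hc₀.1.idem, hBsym]
        simp only []
        rw [e1, key (c₀ * x) y, e2]
      · intro c hc
        exact h1 c c₀ hc hc₀
    · exfalso
      apply hBne
      have hempty : {c : A | IsPrimJAxis F A α β c} = ∅ := by
        ext c
        simp only [Set.mem_setOf_eq, Set.mem_empty_iff_false, iff_false]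
        exact fun hc => hex ⟨c, hc⟩
      have hspan := span_axes h2 hα1 hβ1 hαβ hA
      rw [hempty, Submodule.span_empty] at hspan
      have hzero : ∀ x : A, x = 0 := by
        intro x
        have hx : x ∈ (⊥ : Submodule F A) := by rw [hspan]; trivial
        simpa using hx
      ext u v
      rw [hzero u]
      simp
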